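/- The generalized Krawtchouk polynomials are orthogonal in the sense that ∑_{k=0}^{min(n,l)} K_k(n,l;q;i) · K_j(n,l;q;k) = q^{nl} · δ_{i,j} for all 0 ≤ i, j ≤ min(n,l). -/

import Mathlib

set_option linter.unusedSectionVars false

noncomputable def gbinom (q : ℝ) (a k : ℤ) : ℝ :=
  if k < 0 then 0
  else ∏ i ∈ Finset.range k.toNat, (q ^ (a - k + i + 1) - 1) / (q ^ ((i : ℤ) + 1) - 1)

/-- The generalized Krawtchouk polynomial `K_k(n,l;q;x)`. -/
noncomputable def krawtchouk (q : ℝ) (n l : ℕ) (x : ℕ) (k : ℕ) : ℝ :=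
  ∑ j ∈ Finset.range (k + 1),
    (-1 : ℝ) ^ (k - j) * q ^ ((j : ℤ) * l + ((k - j).choose 2 : ℤ)) *
      gbinom q ((n : ℤ) - j) ((n : ℤ) - k) * gbinom q ((n : ℤ) - x) j

open Finset
section
variable (q : ℝ) (hq : 1 < q)

noncomputable def qf (M : ℕ) : ℝ := ∏ i ∈ range M, (q ^ (i+1) - 1)

noncomputable def Qb (A B : ℕ) : ℝ := if B ≤ A then qf q A / (qf q B * qf q (A - B)) else 0

lemma qf_zero' : qf q 0 = 1 := by simp [qf]

lemma qf_succ' (M : ℕ) : qf q (M+1) = qf q M * (q ^ (M+1) - 1) := Finset.prod_range_succ _ _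

include hq

lemma hq0 : (0:ℝ) < q := lt_trans one_pos hq
lemma hqne : q ≠ 0 := ne_of_gt (hq0 q hq)

lemma qf_pos (M : ℕ) : 0 < qf q M := by
  apply Finset.prod_pos
  intro i _
  have : 1 < q ^ (i+1) := one_lt_pow₀ hq (Nat.succ_ne_zero i)
  linarith

lemma qf_ne (M : ℕ) : qf q M ≠ 0 := ne_of_gt (qf_pos q hq M)

lemma qf_zero : qf q 0 = 1 := by simp [qf]

lemma qf_succ (M : ℕ) : qf q (M+1) = qf q M * (q ^ (M+1) - 1) := Finset.prod_range_succ _ _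

lemma Qb_zero_right (A : ℕ) : Qb q A 0 = 1 := by
  rw [Qb, if_pos (Nat.zero_le A), qf_zero', one_mul, Nat.sub_zero]
  exact div_self (qf_ne q hq A)

lemma Qb_self (A : ℕ) : Qb q A A = 1 := by
  rw [Qb, if_pos (le_refl A), Nat.sub_self, qf_zero', mul_one]
  exact div_self (qf_ne q hq A)

lemma Qb_eq_zero {A B : ℕ} (h : A < B) : Qb q A B = 0 := by
  simp [Qb, not_le.mpr h]

lemma Qb_symm {A B : ℕ} (h : B ≤ A) : Qb q A B = Qb q A (A - B) := by
  have h2 : A - B ≤ A := Nat.sub_le _ _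
  have h3 : A - (A - B) = B := by omega
  simp [Qb, h, h2, h3, mul_comm]

lemma Qb_pascal (A B : ℕ) :
    Qb q (A+1) (B+1) = Qb q A B + q^(B+1) * Qb q A (B+1) := by
  rcases le_or_gt (B+1) A with h | h
  · have h1 : B ≤ A := by omega
    have h2 : B + 1 ≤ A + 1 := by omega
    rw [Qb, if_pos h2, Qb, if_pos h1, Qb, if_pos h]
    have e1 : A + 1 - (B+1) = A - B := by omega
    have e2 : A - B = (A - (B+1)) + 1 := by omega
    rw [e1, qf_succ' q A, qf_succ' q B, e2, qf_succ' q (A - (B+1))]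
    have hA := qf_ne q hq A
    have hB := qf_ne q hq B
    have hAB := qf_ne q hq (A - (B+1))
    have n1 : q ^ (B+1) - 1 ≠ 0 := by
      have : 1 < q ^ (B+1) := one_lt_pow₀ hq (Nat.succ_ne_zero B); linarith
    have n2 : q ^ (A - (B+1) + 1) - 1 ≠ 0 := by
      have : 1 < q ^ (A - (B+1) + 1) := one_lt_pow₀ hq (Nat.succ_ne_zero _); linarith
    have key : q ^ (A+1) = q ^ (B+1) * q ^ (A - (B+1) + 1) := by
      rw [← pow_add]; congr 1; omega
    rw [key]
    field_simp
    ring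
  · -- A < B + 1, i.e. A ≤ B
    rcases Nat.lt_or_ge A (B+1) with _ | _
    · rcases Nat.eq_or_lt_of_le (show A ≤ B by omega) with h' | h'
      · subst h'
        rw [Qb_self q hq, Qb_self q hq, Qb_eq_zero q hq (Nat.lt_succ_self A), mul_zero, add_zero]
      · rw [Qb_eq_zero q hq (show A < B+1 by omega), Qb_eq_zero q hq (show A < B by omega),
          Qb_eq_zero q hq (show A+1 < B+1 by omega), mul_zero, add_zero]
    · omega

lemma Qb_trinomial {A B C : ℕ} (hCB : C ≤ B) :
    Qb q A B * Qb q B C = Qb q A C * Qb q (A - C) (B - C) := by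
  rcases le_or_gt B A with hBA | hBA
  · have hCA : C ≤ A := le_trans hCB hBA
    have h1 : B - C ≤ A - C := by omega
    rw [Qb, if_pos hBA, Qb, if_pos hCB, Qb, if_pos hCA, Qb, if_pos h1]
    have e1 : A - C - (B - C) = A - B := by omega
    rw [e1]
    have h2 := qf_ne q hq (A - B)
    have h3 := qf_ne q hq (A - C)
    have h4 := qf_ne q hq (B - C)
    have h5 := qf_ne q hq B
    have h6 := qf_ne q hq C
    field_simp
  · rw [Qb_eq_zero q hq hBA, zero_mul]
    rcases le_or_gt C A with hCA | hCA
    · rw [Qb_eq_zero q hq (show A - C < B - C by omega), mul_zero]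
    · rw [Qb_eq_zero q hq hCA, zero_mul]

lemma qbt (z : ℝ) : ∀ M : ℕ,
    ∑ t ∈ range (M+1), (-1:ℝ)^t * q^(t.choose 2) * z^t * Qb q M t
      = ∏ r ∈ range M, (1 - z * q^r) := by
  intro M
  induction M generalizing z with
  | zero => simp [Qb_zero_right q hq]
  | succ M ih =>
    have split : ∀ t ∈ range (M+2),
        (-1:ℝ)^t * q^(t.choose 2) * z^t * Qb q (M+1) t
          = (-1:ℝ)^t * q^(t.choose 2) * (z*q)^t * Qb q M t
            + (-1:ℝ)^t * q^(t.choose 2) * z^t * (if t = 0 then 0 else Qb q M (t-1)) := by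
      intro t _
      rcases t with _ | s
      · simp [Qb_zero_right q hq]
      · rw [if_neg (Nat.succ_ne_zero s), Nat.succ_sub_one, Qb_pascal q hq]
        rw [mul_pow]
        ring
    rw [Finset.sum_congr rfl split, Finset.sum_add_distrib]
    have first : ∑ t ∈ range (M+2), (-1:ℝ)^t * q^(t.choose 2) * (z*q)^t * Qb q M t
        = ∏ r ∈ range M, (1 - z*q * q^r) := by
      rw [Finset.sum_range_succ, Qb_eq_zero q hq (Nat.lt_succ_self M), mul_zero, add_zero]
      exact ih (z*q)
    have second : ∑ t ∈ range (M+2),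
        (-1:ℝ)^t * q^(t.choose 2) * z^t * (if t = 0 then 0 else Qb q M (t-1))
        = -z * ∏ r ∈ range M, (1 - z*q * q^r) := by
      rw [Finset.sum_range_succ']
      simp only [if_neg (Nat.succ_ne_zero _), Nat.succ_sub_one, if_pos, mul_zero, add_zero,
        pow_zero, one_mul, mul_one, Nat.choose]
      rw [← ih (z*q), Finset.mul_sum]
      apply Finset.sum_congr rfl
      intro s _
      have hc : s.choose 1 + s.choose (1+1) = s.choose 2 + s := by
        simp [Nat.choose_one_right]; omega
      rw [hc, pow_add, pow_succ, mul_pow]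
      ring
    rw [first, second, Finset.prod_range_succ']
    have : ∀ x ∈ range M, (1 - z * q ^ (x+1)) = (1 - z * q * q ^ x) := by
      intro x _; rw [pow_succ]; ring
    rw [Finset.prod_congr rfl this]
    ring

lemma qbt_one (M : ℕ) :
    ∑ t ∈ range (M+1), (-1:ℝ)^t * q^(t.choose 2) * Qb q M t
      = if M = 0 then 1 else 0 := by
  have h := qbt q hq 1 M
  simp only [one_pow, mul_one] at h
  rw [h]
  rcases M with _ | M
  · simp
  · rw [if_neg (Nat.succ_ne_zero M)]
    apply Finset.prod_eq_zero (Finset.mem_range.mpr (Nat.succ_pos M))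
    simp

lemma qb_vandermonde (m p : ℕ) : ∀ r : ℕ,
    Qb q (m+p) r = ∑ s ∈ range (r+1), Qb q m s * Qb q p (r-s) * q^((m-s)*(r-s)) := by
  induction m with
  | zero =>
    intro r
    rw [Finset.sum_eq_single 0]
    · simp [Qb_zero_right q hq]
    · intro s _ hs
      rw [Qb_eq_zero q hq (by omega : (0:ℕ) < s), zero_mul, zero_mul]
    · intro h; exact absurd (Finset.mem_range.mpr (Nat.succ_pos r)) h
  | succ m ih =>
    intro r
    rcases r with _ | r
    · simp [Qb_zero_right q hq]
    · have e1 : m + 1 + p = (m + p) + 1 := by omega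
      set a : ℕ → ℝ := fun s => Qb q m s * Qb q p (r-s) * q^((m-s)*(r-s)) with ha
      set b : ℕ → ℝ := fun s => Qb q m s * Qb q p (r+1-s) * q^((m-s)*(r+1-s)) with hb
      set t : ℕ → ℝ := fun s => Qb q (m+1) s * Qb q p (r+1-s) * q^((m+1-s)*(r+1-s)) with ht
      have hT : ∑ s ∈ range (r+2), t s = ∑ s ∈ range (r+1), t (s+1) + t 0 :=
        Finset.sum_range_succ' t (r+1)
      have hB : ∑ s ∈ range (r+2), b s = ∑ s ∈ range (r+1), b (s+1) + b 0 :=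
        Finset.sum_range_succ' b (r+1)
      have ht0 : t 0 = q^(r+1) * b 0 := by
        simp only [ht, hb]
        rw [Qb_zero_right q hq, Qb_zero_right q hq]
        rw [show (m+1-0)*(r+1-0) = (r+1) + (m-0)*(r+1-0) by simp only [Nat.sub_zero]; ring, pow_add]
        ring
      have hts : ∀ s ∈ range (r+1), t (s+1) = a s + q^(r+1) * b (s+1) := by
        intro s hs
        have hsr : s ≤ r := by have := Finset.mem_range.mp hs; omega
        simp only [ht, ha, hb]
        rw [Qb_pascal q hq]
        have e2 : r + 1 - (s+1) = r - s := by omega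
        have e3 : m + 1 - (s+1) = m - s := by omega
        rw [e2, e3, add_mul, add_mul]
        rcases le_or_gt (s+1) m with hsm | hsm
        · have e4 : (m-s)*(r-s) = (m-(s+1))*(r-s) + (r-s) := by
            rw [show m-s = (m-(s+1))+1 from by omega]; ring
          rw [e4, show (m-(s+1)) = m - s - 1 from by omega, pow_add]
          have hpw : q^(s+1) * q^(r-s) = q^(r+1) := by
            rw [← pow_add]; congr 1; omega
          rw [← hpw]
          ring
        · rw [Qb_eq_zero q hq (show m < s+1 by omega)]
          ring
      have goal2 : m + 1 + p = (m + p) + 1 := e1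
      rw [e1, Qb_pascal q hq, ih r, ih (r+1)]
      rw [hT, hB, Finset.sum_congr rfl hts, Finset.sum_add_distrib, ht0, mul_add,
        Finset.mul_sum]
      ring

omit hq in
lemma two_choose2 (m : ℕ) : 2 * ((m.choose 2 : ℤ)) = m * (m - 1) := by
  induction m with
  | zero => simp
  | succ m ihm =>
    rw [Nat.choose_succ_succ, Nat.choose_one_right]
    push_cast
    push_cast at ihm
    linarith

omit hq in
lemma choose2_cast {a k : ℕ} (h : a ≤ k) :
    ((k-a).choose 2 : ℤ) = (k.choose 2 : ℤ) + (a.choose 2 : ℤ) + a - a * k := by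
  have h1 := two_choose2 (k - a)
  have h2 := two_choose2 k
  have h3 := two_choose2 a
  have hc : ((k - a : ℕ) : ℤ) = (k : ℤ) - a := by omega
  rw [hc] at h1
  have : 2 * ((k-a).choose 2 : ℤ) = 2 * ((k.choose 2 : ℤ) + (a.choose 2 : ℤ) + a - a * k) := by
    rw [h1]; ring_nf; ring_nf at h2 h3; nlinarith [h2, h3]
  linarith

lemma gbinom_eq (A B : ℕ) : gbinom q A B = Qb q A B := by
  rw [gbinom, if_neg (by exact_mod_cast not_lt.mpr (Int.ofNat_nonneg B))]
  have htn : ((B : ℤ)).toNat = B := Int.toNat_natCast B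
  rw [htn]
  rcases le_or_gt B A with hBA | hBA
  · have hfac : ∀ i ∈ range B,
        (q ^ ((A:ℤ) - B + i + 1) - 1) / (q ^ ((i:ℤ) + 1) - 1)
          = (q ^ ((A - B) + i + 1) - 1) / (q ^ (i + 1) - 1) := by
      intro i _
      have e1 : (A:ℤ) - B + i + 1 = (((A - B) + i + 1 : ℕ) : ℤ) := by push_cast [hBA]; ring
      have e2 : ((i:ℤ) + 1) = ((i + 1 : ℕ) : ℤ) := by push_cast; ring
      rw [e1, e2, zpow_natCast, zpow_natCast]
    rw [Finset.prod_congr rfl hfac, Finset.prod_div_distrib]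
    have hnum : qf q (A - B) * ∏ i ∈ range B, (q ^ ((A - B) + i + 1) - 1) = qf q A := by
      rw [qf, qf, ← Finset.prod_range_add, Nat.sub_add_cancel hBA]
    have hden : ∏ i ∈ range B, (q ^ (i + 1) - 1) = qf q B := rfl
    rw [hden, Qb, if_pos hBA, ← hnum]
    rw [mul_comm (qf q B) (qf q (A - B)), ← div_div,
      mul_comm (qf q (A - B)), mul_div_assoc, div_self (qf_ne q hq (A - B)), mul_one]
  · rw [Qb, if_neg (not_le.mpr hBA)]
    apply Finset.prod_eq_zero (Finset.mem_range.mpr (show B - A - 1 < B by omega))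
    have e : (A:ℤ) - B + (B - A - 1 : ℕ) + 1 = 0 := by omega
    rw [e, zpow_zero, sub_self, zero_div]

lemma krawtchouk_eq (n l x k : ℕ) (hx : x ≤ n) (hk : k ≤ n) :
    krawtchouk q n l x k = ∑ a ∈ range (k+1),
      (-1:ℝ)^(k-a) * q^(a*l + (k-a).choose 2) * Qb q (n-a) (n-k) * Qb q (n-x) a := by
  rw [krawtchouk]
  apply Finset.sum_congr rfl
  intro a ha
  have hak : a ≤ k := by have := Finset.mem_range.mp ha; omega
  have e1 : ((a:ℤ) * l + ((k-a).choose 2 : ℤ)) = ((a*l + (k-a).choose 2 : ℕ) : ℤ) := by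
    push_cast; ring
  have e2 : (n:ℤ) - a = ((n - a : ℕ) : ℤ) := by omega
  have e3 : (n:ℤ) - k = ((n - k : ℕ) : ℤ) := by omega
  have e4 : (n:ℤ) - x = ((n - x : ℕ) : ℤ) := by omega
  have e5 : (a : ℤ) = ((a:ℕ) : ℤ) := rfl
  rw [e1, zpow_natCast, e2, e3, e4, gbinom_eq q hq, gbinom_eq q hq]

omit hq in
lemma tri_swap (K : ℕ) (f : ℕ → ℕ → ℝ) :
    ∑ a ∈ range (K+1), ∑ s ∈ range (K+1-a), f a s
      = ∑ s ∈ range (K+1), ∑ a ∈ range (K+1-s), f a s := by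
  have key : ∀ g : ℕ → ℕ → ℝ,
      (∑ a ∈ range (K+1), ∑ s ∈ range (K+1-a), g a s)
        = ∑ a ∈ range (K+1), ∑ s ∈ range (K+1), if a + s ≤ K then g a s else 0 := by
    intro g
    apply Finset.sum_congr rfl
    intro a ha
    have haK : a ≤ K := by have := Finset.mem_range.mp ha; omega
    rw [← Finset.sum_subset (Finset.range_subset_range.mpr (by omega : K+1-a ≤ K+1))]
    · exact Finset.sum_congr rfl
        (fun s hs => (if_pos (by have := Finset.mem_range.mp hs; omega)).symm)
    · intro s hs hns
      have h1 := Finset.mem_range.mp hs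
      have h2 : ¬ s < K+1-a := fun h => hns (Finset.mem_range.mpr h)
      exact if_neg (by omega)
  rw [key f, Finset.sum_comm, key (fun s a => f a s)]
  apply Finset.sum_congr rfl; intro s _
  apply Finset.sum_congr rfl; intro a _
  congr 1
  simp [Nat.add_comm]

lemma vanish (n l x k : ℕ) (hx : x ≤ l) (hlk : l < k) (hkn : k ≤ n) :
    krawtchouk q n l x k = 0 := by
  have hqne' : q ≠ 0 := hqne q hq
  have hxn : x ≤ n := by omega
  rw [krawtchouk_eq q hq n l x k hxn hkn]
  set F : ℕ → ℕ → ℝ := fun a s =>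
    Qb q x s * Qb q (n-x-a) (k-a-s) * q^((x-s)*(k-a-s)) *
      ((-1:ℝ)^(k-a) * q^(a*l + (k-a).choose 2) * Qb q (n-x) a) with hF
  have step1 : ∀ a ∈ range (k+1),
      (-1:ℝ)^(k-a) * q^(a*l + (k-a).choose 2) * Qb q (n-a) (n-k) * Qb q (n-x) a
        = ∑ s ∈ range (k+1-a), F a s := by
    intro a ha
    have hak : a ≤ k := by have := Finset.mem_range.mp ha; omega
    rcases le_or_gt a (n-x) with hanx | hanx
    · have hsy : Qb q (n-a) (n-k) = Qb q (n-a) (k-a) := by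
        rw [Qb_symm q hq (show n-k ≤ n-a by omega), show n-a-(n-k) = k-a from by omega]
      rw [hsy, show n-a = x+(n-x-a) from by omega, qb_vandermonde q hq,
        show k-a+1 = k+1-a from by omega, Finset.mul_sum, Finset.sum_mul]
      apply Finset.sum_congr rfl
      intro s _
      simp only [hF]
      ring
    · rw [Qb_eq_zero q hq (show n-x < a by omega), mul_zero]
      symm
      apply Finset.sum_eq_zero
      intro s _
      simp only [hF]
      rw [Qb_eq_zero q hq (show n-x < a by omega)]
      ring
  rw [Finset.sum_congr rfl step1, tri_swap k F]
  apply Finset.sum_eq_zero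
  intro s hs
  rcases le_or_gt s x with hsx | hsx
  · -- main case s ≤ x
    have hsk : s < k := by omega
    set M := k - s with hM
    set e : ℤ := (l:ℤ) + 1 - k - x + s with he
    set C : ℝ := Qb q x s * Qb q (n-x) M * ((-1:ℝ)^k * q^((k.choose 2 : ℤ) + ((x:ℤ)-(s:ℤ))*(M:ℤ))) with hC
    have hterm : ∀ a ∈ range (M+1),
        F a s = C * ((-1:ℝ)^a * q^(a.choose 2) * (q^e)^a * Qb q M a) := by
      intro a hamem
      have haM : a ≤ M := by have := Finset.mem_range.mp hamem; omega
      have hak : a ≤ k := by omega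
      have htri := Qb_trinomial q hq (show a ≤ M from haM) (A := n-x)
      have hMa : k - a - s = M - a := by omega
      have hnxa : n - x - a = (n - x) - a := rfl
      have hsign : (-1:ℝ)^(k-a) = (-1:ℝ)^k * (-1:ℝ)^a := by
        have h1 : (-1:ℝ)^k = (-1:ℝ)^(k-a) * (-1:ℝ)^a := by
          rw [← pow_add]; congr 1; omega
        have h2 : (-1:ℝ)^a * (-1:ℝ)^a = 1 := by
          rw [← pow_add]; exact Even.neg_one_pow ⟨a, rfl⟩
        rw [h1, mul_assoc, h2, mul_one]
      have hpow : q^((x-s)*(M-a)) * q^(a*l + (k-a).choose 2)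
          = q^((k.choose 2 : ℤ) + ((x:ℤ)-(s:ℤ))*(M:ℤ)) * q^(a.choose 2) * (q^e)^a := by
        rw [← zpow_natCast q ((x-s)*(M-a)), ← zpow_natCast q (a*l + (k-a).choose 2),
          ← zpow_natCast q (a.choose 2), ← zpow_natCast (q^e) a, ← zpow_mul,
          ← zpow_add₀ hqne', ← zpow_add₀ hqne', ← zpow_add₀ hqne']
        congr 1
        have c1 : ((x-s:ℕ):ℤ) = (x:ℤ) - s := by omega
        have c2 : ((M-a:ℕ):ℤ) = (M:ℤ) - a := by omega
        have c3 := choose2_cast (show a ≤ k from hak)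
        have c4 : ((M:ℕ):ℤ) = (k:ℤ) - s := by omega
        push_cast [c1, c2, c3, c4, he]
        ring
      simp only [hF, hMa, hC]
      rw [hsign]
      calc Qb q x s * Qb q ((n-x)-a) (M-a) * q^((x-s)*(M-a)) *
            ((-1:ℝ)^k * (-1:ℝ)^a * q^(a*l + (k-a).choose 2) * Qb q (n-x) a)
          = (Qb q (n-x) a * Qb q ((n-x)-a) (M-a)) *
            (Qb q x s * ((-1:ℝ)^k * (-1:ℝ)^a) * (q^((x-s)*(M-a)) * q^(a*l + (k-a).choose 2))) := by
            ring
        _ = (Qb q (n-x) M * Qb q M a) *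
            (Qb q x s * ((-1:ℝ)^k * (-1:ℝ)^a) *
              (q^((k.choose 2 : ℤ) + ((x:ℤ)-(s:ℤ))*(M:ℤ)) * q^(a.choose 2) * (q^e)^a)) := by
            rw [← htri, hpow]
        _ = Qb q x s * Qb q (n-x) M * ((-1:ℝ)^k * q^((k.choose 2 : ℤ) + ((x:ℤ)-(s:ℤ))*(M:ℤ))) *
            ((-1:ℝ)^a * q^(a.choose 2) * (q^e)^a * Qb q M a) := by
            ring
    rw [show k+1-s = M+1 from by omega, Finset.sum_congr rfl hterm, ← Finset.mul_sum,
      qbt q hq (q^e) M]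
    have hr0 : (x+k-l-1-s) ∈ range M := by apply Finset.mem_range.mpr; omega
    rw [Finset.prod_eq_zero hr0, mul_zero]
    rw [← zpow_natCast q (x+k-l-1-s), ← zpow_add₀ hqne',
      show e + ((x+k-l-1-s : ℕ):ℤ) = 0 from by push_cast [show l+1+s ≤ x+k from by omega]; omega,
      zpow_zero, sub_self]
  · -- s > x
    apply Finset.sum_eq_zero
    intro a _
    simp only [hF]
    rw [Qb_eq_zero q hq hsx]
    ring

lemma T_lemma (N a b : ℕ) (haN : a ≤ N) :
    ∑ k ∈ range (N+1), (-1:ℝ)^(k-a) * q^((k-a).choose 2) * Qb q (N-a) (N-k) * Qb q (N-k) b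
      = if a + b = N then 1 else 0 := by
  have refl1 : ∑ k ∈ range (N+1), (-1:ℝ)^(k-a) * q^((k-a).choose 2) * Qb q (N-a) (N-k) * Qb q (N-k) b
      = ∑ t ∈ range (N+1), (-1:ℝ)^((N-t)-a) * q^(((N-t)-a).choose 2) * Qb q (N-a) t * Qb q t b := by
    rw [← Finset.sum_range_reflect
      (fun t => (-1:ℝ)^((N-t)-a) * q^(((N-t)-a).choose 2) * Qb q (N-a) t * Qb q t b) (N+1)]
    apply Finset.sum_congr rfl
    intro k hk
    have hkN : k ≤ N := by have := Finset.mem_range.mp hk; omega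
    rw [show N + 1 - 1 - k = N - k from by omega, show N - (N - k) = k from by omega]
  rw [refl1]
  rcases le_or_gt (a + b) N with hab | hab
  · set M' := N - a - b with hM'
    have step : ∀ t ∈ range (N+1),
        (-1:ℝ)^((N-t)-a) * q^(((N-t)-a).choose 2) * Qb q (N-a) t * Qb q t b
          = if b ≤ t then Qb q (N-a) b *
              ((-1:ℝ)^(M'-(t-b)) * q^((M'-(t-b)).choose 2) * Qb q ((N-a)-b) (t-b)) else 0 := by
      intro t ht
      have htN : t ≤ N := by have := Finset.mem_range.mp ht; omega
      rcases le_or_gt b t with hbt | hbt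
      · rw [if_pos hbt]
        have htri := Qb_trinomial q hq (show b ≤ t from hbt) (A := N-a)
        have e1 : (N-t)-a = M'-(t-b) := by omega
        rw [e1]
        calc (-1:ℝ)^(M'-(t-b)) * q^((M'-(t-b)).choose 2) * Qb q (N-a) t * Qb q t b
            = (Qb q (N-a) t * Qb q t b) * ((-1:ℝ)^(M'-(t-b)) * q^((M'-(t-b)).choose 2)) := by ring
          _ = (Qb q (N-a) b * Qb q ((N-a)-b) (t-b)) * ((-1:ℝ)^(M'-(t-b)) * q^((M'-(t-b)).choose 2)) := by rw [htri]
          _ = Qb q (N-a) b * ((-1:ℝ)^(M'-(t-b)) * q^((M'-(t-b)).choose 2) * Qb q ((N-a)-b) (t-b)) := by ring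
      · rw [if_neg (not_le.mpr hbt), Qb_eq_zero q hq hbt, mul_zero]
    rw [Finset.sum_congr rfl step]
    rw [show N + 1 = b + (N+1-b) from by omega, Finset.sum_range_add]
    have part1 : ∑ t ∈ range b, (if b ≤ t then Qb q (N-a) b *
        ((-1:ℝ)^(M'-(t-b)) * q^((M'-(t-b)).choose 2) * Qb q ((N-a)-b) (t-b)) else 0) = 0 := by
      apply Finset.sum_eq_zero
      intro t ht
      exact if_neg (by have := Finset.mem_range.mp ht; omega)
    rw [part1, zero_add]
    have part2 : ∀ u ∈ range (N+1-b), (if b ≤ b + u then Qb q (N-a) b *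
        ((-1:ℝ)^(M'-((b+u)-b)) * q^((M'-((b+u)-b)).choose 2) * Qb q ((N-a)-b) ((b+u)-b)) else 0)
          = Qb q (N-a) b * ((-1:ℝ)^(M'-u) * q^((M'-u).choose 2) * Qb q ((N-a)-b) u) := by
      intro u hu
      rw [if_pos (Nat.le_add_right b u), show (b+u)-b = u from by omega]
    rw [Finset.sum_congr rfl part2, ← Finset.mul_sum]
    have hNab : (N-a)-b = M' := by omega
    rw [hNab]
    have shrink : ∑ u ∈ range (N+1-b), ((-1:ℝ)^(M'-u) * q^((M'-u).choose 2) * Qb q M' u)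
        = ∑ u ∈ range (M'+1), ((-1:ℝ)^(M'-u) * q^((M'-u).choose 2) * Qb q M' u) := by
      symm
      apply Finset.sum_subset (Finset.range_subset_range.mpr (by omega))
      intro u _ hu
      have hMu : M' < u := by by_contra hc; exact hu (Finset.mem_range.mpr (by omega))
      rw [Qb_eq_zero q hq hMu, mul_zero]
    rw [shrink]
    have refl2 : ∑ u ∈ range (M'+1), ((-1:ℝ)^(M'-u) * q^((M'-u).choose 2) * Qb q M' u)
        = ∑ v ∈ range (M'+1), ((-1:ℝ)^v * q^(v.choose 2) * Qb q M' v) := by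
      calc ∑ u ∈ range (M'+1), ((-1:ℝ)^(M'-u) * q^((M'-u).choose 2) * Qb q M' u)
          = ∑ u ∈ range (M'+1),
            (fun v => (-1:ℝ)^v * q^(v.choose 2) * Qb q M' (M'-v)) (M'+1-1-u) := by
            apply Finset.sum_congr rfl
            intro u hu
            have huM : u ≤ M' := by have := Finset.mem_range.mp hu; omega
            simp only
            rw [show M'+1-1-u = M'-u from by omega, show M'-(M'-u) = u from by omega]
        _ = ∑ v ∈ range (M'+1), (-1:ℝ)^v * q^(v.choose 2) * Qb q M' (M'-v) := by
            simpa using Finset.sum_range_reflect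
              (fun v => (-1:ℝ)^v * q^(v.choose 2) * Qb q M' (M'-v)) (M'+1)
        _ = ∑ v ∈ range (M'+1), (-1:ℝ)^v * q^(v.choose 2) * Qb q M' v := by
            apply Finset.sum_congr rfl
            intro v hv
            have hvM : v ≤ M' := by have := Finset.mem_range.mp hv; omega
            rw [← Qb_symm q hq hvM]
    rw [refl2, qbt_one q hq M']
    rcases Nat.eq_or_lt_of_le hab with heq | hlt
    · rw [if_pos heq, show M' = 0 from by omega, if_pos rfl, mul_one,
        show N - a = b from by omega, Qb_self q hq]
    · rw [if_neg (show ¬ a + b = N from by omega), if_neg (show ¬ M' = 0 from by omega), mul_zero]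
  · rw [if_neg (by omega)]
    apply Finset.sum_eq_zero
    intro t ht
    rcases le_or_gt b t with hbt | hbt
    · rw [Qb_eq_zero q hq (show N - a < t from by omega), mul_zero, zero_mul]
    · rw [Qb_eq_zero q hq hbt, mul_zero]

lemma main_full (n l i j : ℕ) (hi : i ≤ n) (hj : j ≤ n) :
    ∑ k ∈ range (n+1), krawtchouk q n l i k * krawtchouk q n l k j
      = q^(n*l) * (if i = j then 1 else 0) := by
  set R' : ℕ → ℝ := fun b =>
    (-1:ℝ)^(j-b) * q^(b*l + (j-b).choose 2) * Qb q (n-b) (n-j) with hR'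
  have hK : ∀ k ∈ range (n+1),
      krawtchouk q n l i k * krawtchouk q n l k j
        = ∑ b ∈ range (j+1), ∑ a ∈ range (n+1),
            ((-1:ℝ)^(k-a) * q^((k-a).choose 2) * Qb q (n-a) (n-k) * Qb q (n-k) b) *
              (q^(a*l) * Qb q (n-i) a * R' b) := by
    intro k hk
    have hkn : k ≤ n := by have := Finset.mem_range.mp hk; omega
    rw [krawtchouk_eq q hq n l i k hi hkn, krawtchouk_eq q hq n l k j hkn hj]
    have ext : ∑ a ∈ range (k+1),
          (-1:ℝ)^(k-a) * q^(a*l + (k-a).choose 2) * Qb q (n-a) (n-k) * Qb q (n-i) a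
        = ∑ a ∈ range (n+1),
          (-1:ℝ)^(k-a) * q^(a*l + (k-a).choose 2) * Qb q (n-a) (n-k) * Qb q (n-i) a := by
      apply Finset.sum_subset (Finset.range_subset_range.mpr (by omega))
      intro a ha hna
      have h1 : k < a := by
        by_contra hc
        exact hna (Finset.mem_range.mpr (by omega))
      have h2 : a ≤ n := by have := Finset.mem_range.mp ha; omega
      rw [Qb_eq_zero q hq (show n-a < n-k from by omega), mul_zero, zero_mul]
    rw [ext, Finset.sum_mul_sum, Finset.sum_comm]
    apply Finset.sum_congr rfl; intro b _
    apply Finset.sum_congr rfl; intro a _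
    rw [pow_add q (a*l) ((k-a).choose 2)]
    simp only [hR']
    ring
  rw [Finset.sum_congr rfl hK, Finset.sum_comm]
  have inner : ∀ b ∈ range (j+1),
      (∑ k ∈ range (n+1), ∑ a ∈ range (n+1),
        ((-1:ℝ)^(k-a) * q^((k-a).choose 2) * Qb q (n-a) (n-k) * Qb q (n-k) b) *
          (q^(a*l) * Qb q (n-i) a * R' b))
        = q^((n-b)*l) * Qb q (n-i) (n-b) * R' b := by
    intro b hb
    have hbn : b ≤ n := by have := Finset.mem_range.mp hb; omega
    rw [Finset.sum_comm]
    have hper : ∀ a ∈ range (n+1),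
        ∑ k ∈ range (n+1),
          ((-1:ℝ)^(k-a) * q^((k-a).choose 2) * Qb q (n-a) (n-k) * Qb q (n-k) b) *
            (q^(a*l) * Qb q (n-i) a * R' b)
          = (if a + b = n then 1 else 0) * (q^(a*l) * Qb q (n-i) a * R' b) := by
      intro a ha
      have han : a ≤ n := by have := Finset.mem_range.mp ha; omega
      rw [← Finset.sum_mul, T_lemma q hq n a b han]
    rw [Finset.sum_congr rfl hper, Finset.sum_eq_single (n-b)]
    · rw [if_pos (by omega), one_mul]
    · intro a ha hne
      rw [if_neg (by omega), zero_mul]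
    · intro h; exact absurd (Finset.mem_range.mpr (by omega)) h
  rw [Finset.sum_congr rfl inner]
  rcases le_or_gt i j with hij | hij
  · have hper2 : ∀ b ∈ range (j+1),
        q^((n-b)*l) * Qb q (n-i) (n-b) * R' b
          = q^(n*l) * Qb q (n-i) (n-j) *
              ((-1:ℝ)^(j-b) * q^((j-b).choose 2) * Qb q (j-i) (j-b)) := by
      intro b hb
      have hbj : b ≤ j := by have := Finset.mem_range.mp hb; omega
      simp only [hR']
      have hpw : q^((n-b)*l) * q^(b*l + (j-b).choose 2) = q^(n*l) * q^((j-b).choose 2) := by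
        rw [← pow_add, ← pow_add]
        congr 1
        have h3 : (n-b)*l + b*l = n*l := by
          rw [← Nat.add_mul, Nat.sub_add_cancel (by omega : b ≤ n)]
        omega
      rcases lt_or_ge b i with hbi | hbi
      · rw [Qb_eq_zero q hq (show n-i < n-b from by omega),
          Qb_eq_zero q hq (show j-i < j-b from by omega)]
        ring
      · have htri := Qb_trinomial q hq (show (n-j) ≤ (n-b) from by omega) (A := n-i)
        rw [show (n-i)-(n-j) = j-i from by omega, show (n-b)-(n-j) = j-b from by omega] at htri
        calc q^((n-b)*l) * Qb q (n-i) (n-b) *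
              ((-1:ℝ)^(j-b) * q^(b*l + (j-b).choose 2) * Qb q (n-b) (n-j))
            = (Qb q (n-i) (n-b) * Qb q (n-b) (n-j)) *
              ((-1:ℝ)^(j-b) * (q^((n-b)*l) * q^(b*l + (j-b).choose 2))) := by ring
          _ = (Qb q (n-i) (n-j) * Qb q (j-i) (j-b)) *
              ((-1:ℝ)^(j-b) * (q^(n*l) * q^((j-b).choose 2))) := by rw [htri, hpw]
          _ = q^(n*l) * Qb q (n-i) (n-j) *
              ((-1:ℝ)^(j-b) * q^((j-b).choose 2) * Qb q (j-i) (j-b)) := by ring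
    rw [Finset.sum_congr rfl hper2, ← Finset.mul_sum]
    have refl3 : ∑ b ∈ range (j+1), ((-1:ℝ)^(j-b) * q^((j-b).choose 2) * Qb q (j-i) (j-b))
        = ∑ v ∈ range (j+1), ((-1:ℝ)^v * q^(v.choose 2) * Qb q (j-i) v) := by
      calc ∑ b ∈ range (j+1), ((-1:ℝ)^(j-b) * q^((j-b).choose 2) * Qb q (j-i) (j-b))
          = ∑ b ∈ range (j+1),
            (fun v => (-1:ℝ)^v * q^(v.choose 2) * Qb q (j-i) v) (j+1-1-b) := by
            apply Finset.sum_congr rfl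
            intro b hb
            simp only
            rw [show j+1-1-b = j-b from by omega]
        _ = _ := by
            simpa using Finset.sum_range_reflect
              (fun v => (-1:ℝ)^v * q^(v.choose 2) * Qb q (j-i) v) (j+1)
    rw [refl3]
    have shrink : ∑ v ∈ range (j+1), ((-1:ℝ)^v * q^(v.choose 2) * Qb q (j-i) v)
        = ∑ v ∈ range ((j-i)+1), ((-1:ℝ)^v * q^(v.choose 2) * Qb q (j-i) v) := by
      symm
      apply Finset.sum_subset (Finset.range_subset_range.mpr (by omega))
      intro v hv hnv
      have hlt : j - i < v := by
        by_contra hc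
        exact hnv (Finset.mem_range.mpr (by omega))
      rw [Qb_eq_zero q hq hlt, mul_zero]
    rw [shrink, qbt_one q hq (j-i)]
    rcases Nat.eq_or_lt_of_le hij with heq | hlt
    · rw [if_pos heq, if_pos (by omega : j - i = 0), heq, Qb_self q hq, mul_one, mul_one]
    · rw [if_neg (by omega : ¬ i = j), if_neg (by omega : ¬ j - i = 0), mul_zero, mul_zero]
  · rw [if_neg (by omega : ¬ i = j), mul_zero]
    apply Finset.sum_eq_zero
    intro b hb
    have hbj : b ≤ j := by have := Finset.mem_range.mp hb; omega
    rw [Qb_eq_zero q hq (show n-i < n-b from by omega), mul_zero, zero_mul]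

end

theorem stmt16 (q : ℝ) (hq : 1 < q) (n l i j : ℕ)
    (hi : i ≤ min n l) (hj : j ≤ min n l) :
    ∑ k ∈ Finset.range (min n l + 1), krawtchouk q n l i k * krawtchouk q n l k j =
      q ^ ((n : ℤ) * l) * (if i = j then 1 else 0) := by
  have hzp : q ^ ((n:ℤ) * (l:ℤ)) = q ^ (n*l : ℕ) := by
    rw [show ((n:ℤ)*(l:ℤ)) = ((n*l : ℕ):ℤ) from by push_cast; ring, zpow_natCast]
  rw [hzp]
  rcases le_total n l with h | h
  · have hm : min n l = n := min_eq_left h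
    rw [hm] at hi hj ⊢
    exact main_full q hq n l i j hi hj
  · have hm : min n l = l := min_eq_right h
    rw [hm] at hi hj ⊢
    have ext : ∑ k ∈ Finset.range (l+1), krawtchouk q n l i k * krawtchouk q n l k j
        = ∑ k ∈ Finset.range (n+1), krawtchouk q n l i k * krawtchouk q n l k j := by
      apply Finset.sum_subset (Finset.range_subset_range.mpr (by omega))
      intro k hk hnk
      have h1 : l < k := by
        by_contra hc
        exact hnk (Finset.mem_range.mpr (by omega))
      have h2 : k ≤ n := by have := Finset.mem_range.mp hk; omega
      rw [vanish q hq n l i k hi h1 h2, zero_mul]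
    rw [ext]
    exact main_full q hq n l i j (by omega) (by omega)
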